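/- For a probability measure P and finite measure Q with densities p, q, the right derivative of α ↦ ρ_α(Q,P) = P(q/p)^α at α = 0 equals P[ log(q/p) · 1{q > 0} ] (possibly equal to -∞): that is, α^{-1}(ρ_α(Q,P) - P(q>0)) decreases to P log(q/p) 1{q>0} as α ↓ 0. -/

import Mathlib

open MeasureTheory Real Filter

lemma expSlope_mono {t α β : ℝ} (hα : 0 < α) (hαβ : α ≤ β) :
    α⁻¹ * (Real.exp (α * t) - 1) ≤ β⁻¹ * (Real.exp (β * t) - 1) := by
  have hβ : 0 < β := lt_of_lt_of_le hα hαβ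
  have hab : α / β + (1 - α / β) = 1 := by ring
  have h := convexOn_exp.2 (Set.mem_univ (β * t)) (Set.mem_univ (0 : ℝ))
    (div_nonneg hα.le hβ.le) (by rw [sub_nonneg]; exact div_le_one_of_le₀ hαβ hβ.le) hab
  simp only [smul_eq_mul, mul_zero, add_zero, Real.exp_zero, mul_one] at h
  have h1 : (α / β) * (β * t) = α * t := by field_simp
  rw [h1] at h
  rw [inv_mul_eq_div, inv_mul_eq_div, div_le_div_iff₀ hα hβ]
  have h3 := mul_le_mul_of_nonneg_left h hβ.le
  have h4 : β * (α / β * Real.exp (β * t)) = α * Real.exp (β * t) := by field_simp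
  have h5 : β * (1 - α / β) = β - α := by field_simp
  rw [mul_add, h4, h5] at h3
  linarith

lemma rpowSlope_mono {r α β : ℝ} (hr : 0 ≤ r) (hα : 0 < α) (hαβ : α ≤ β) :
    α⁻¹ * (r ^ α - 1) ≤ β⁻¹ * (r ^ β - 1) := by
  have hβ : 0 < β := lt_of_lt_of_le hα hαβ
  rcases eq_or_lt_of_le hr with h0 | h0
  · rw [← h0, Real.zero_rpow hα.ne', Real.zero_rpow hβ.ne']
    simp only [zero_sub, mul_neg, mul_one, neg_le_neg_iff]
    exact inv_anti₀ hα hαβ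
  · rw [Real.rpow_def_of_pos h0, Real.rpow_def_of_pos h0, mul_comm (Real.log r)]
    rw [mul_comm (Real.log r)]
    exact expSlope_mono hα hαβ

lemma rpowSlope_ge_log {r α : ℝ} (hr : 0 < r) (hα : 0 < α) :
    Real.log r ≤ α⁻¹ * (r ^ α - 1) := by
  have h := Real.add_one_le_exp (α * Real.log r)
  rw [Real.rpow_def_of_pos hr, mul_comm (Real.log r)]
  rw [le_inv_mul_iff₀ hα]
  linarith

lemma rpowSlope_tendsto {r : ℝ} (hr : 0 < r) :
    Tendsto (fun α : ℝ => α⁻¹ * (r ^ α - 1)) (nhdsWithin 0 (Set.Ioi 0))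
      (nhds (Real.log r)) := by
  set t := Real.log r with ht
  have hd : HasDerivAt (fun α : ℝ => Real.exp (α * t)) t 0 := by
    have := (Real.hasDerivAt_exp (0 * t)).comp 0 (hasDerivAt_mul_const t)
    simpa [Function.comp_def] using this
  rw [hasDerivAt_iff_tendsto_slope] at hd
  have hle : nhdsWithin (0:ℝ) (Set.Ioi 0) ≤ nhdsWithin 0 {(0:ℝ)}ᶜ :=
    nhdsWithin_mono 0 (fun x hx => ne_of_gt hx)
  have := hd.mono_left hle
  refine this.congr' ?_
  filter_upwards [self_mem_nhdsWithin] with α (hα : (0:ℝ) < α)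
  rw [slope_def_field]
  rw [Real.rpow_def_of_pos hr, mul_comm t α]
  field_simp
  simp [hα.ne']

/-- For a probability measure `P` with density `p` and a finite measure `Q` with
density `q`, the quotient `α⁻¹ (ρ_α(Q,P) - P(q > 0))` decreases, as `α ↓ 0`, to
`P[log(q/p) 1{q>0}]` (possibly `-∞`): it is monotone in `α` on `(0, 1/2]`, tends to the
integral when the latter exists, and tends to `-∞` when it does not. -/
theorem stmt13 {X : Type*} [MeasurableSpace X] (μ : Measure X) [SigmaFinite μ]
    (p q : X → ℝ) (hpm : Measurable p) (hqm : Measurable q)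
    (hp : ∀ x, 0 ≤ p x) (hq : ∀ x, 0 ≤ q x)
    (hpi : Integrable p μ) (hqi : Integrable q μ)
    (hp1 : ∫ x, p x ∂μ = 1)
    (hint : ∀ α ∈ Set.Ioc (0 : ℝ) (1 / 2),
      Integrable (fun x => (q x / p x) ^ α * p x) μ) :
    MonotoneOn
      (fun α : ℝ => α⁻¹ *
        ((∫ x, (q x / p x) ^ α * p x ∂μ) - ∫ x in {x | 0 < q x}, p x ∂μ))
      (Set.Ioc (0 : ℝ) (1 / 2)) ∧
    ((Integrable (fun x => Real.log (q x / p x) * p x)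
        (μ.restrict {x | 0 < q x}) →
      Tendsto
        (fun α : ℝ => α⁻¹ *
          ((∫ x, (q x / p x) ^ α * p x ∂μ) - ∫ x in {x | 0 < q x}, p x ∂μ))
        (nhdsWithin 0 (Set.Ioi 0))
        (nhds (∫ x in {x | 0 < q x}, Real.log (q x / p x) * p x ∂μ))) ∧
     (¬ Integrable (fun x => Real.log (q x / p x) * p x)
        (μ.restrict {x | 0 < q x}) →
      Tendsto
        (fun α : ℝ => α⁻¹ *
          ((∫ x, (q x / p x) ^ α * p x ∂μ) - ∫ x in {x | 0 < q x}, p x ∂μ))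
        (nhdsWithin 0 (Set.Ioi 0)) atBot)) := by
  set S : Set X := {x | 0 < q x} with hSdef
  have hS : MeasurableSet S := measurableSet_lt measurable_const hqm
  set φ : ℝ → X → ℝ := fun α x => α⁻¹ * ((q x / p x) ^ α - 1) * p x with hφdef
  set L : X → ℝ := fun x => Real.log (q x / p x) * p x with hLdef
  have hr0 : ∀ x, 0 ≤ q x / p x := fun x => div_nonneg (hq x) (hp x)
  have hrm : Measurable (fun x => q x / p x) := hqm.div hpm
  -- the unrestricted integral equals the restricted one
  have hrint : ∀ α ∈ Set.Ioc (0 : ℝ) (1 / 2),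
      (∫ x in S, (q x / p x) ^ α * p x ∂μ) = ∫ x, (q x / p x) ^ α * p x ∂μ := by
    intro α hα
    refine setIntegral_eq_integral_of_forall_compl_eq_zero fun x hx => ?_
    have hqx : q x = 0 := le_antisymm (not_lt.1 hx) (hq x)
    rw [hqx, zero_div, Real.zero_rpow hα.1.ne', zero_mul]
  -- integrability of φ α
  have hφint : ∀ α ∈ Set.Ioc (0 : ℝ) (1 / 2), Integrable (φ α) (μ.restrict S) := by
    intro α hα
    have h1 : Integrable (fun x => α⁻¹ * ((q x / p x) ^ α * p x - p x)) (μ.restrict S) :=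
      (((hint α hα).restrict (s := S)).sub (hpi.restrict (s := S))).const_mul α⁻¹
    exact h1.congr (Eventually.of_forall fun x => by simp only [hφdef]; ring)
  -- rewrite the quotient as an integral over S
  have hfeq : ∀ α ∈ Set.Ioc (0 : ℝ) (1 / 2),
      α⁻¹ * ((∫ x, (q x / p x) ^ α * p x ∂μ) - ∫ x in S, p x ∂μ)
        = ∫ x in S, φ α x ∂μ := by
    intro α hα
    rw [← hrint α hα, ← integral_sub ((hint α hα).restrict (s := S)) (hpi.restrict (s := S)),
      ← integral_const_mul]
    exact integral_congr_ae (Eventually.of_forall fun x => by simp only [hφdef]; ring)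
  -- monotonicity
  have hmono : MonotoneOn
      (fun α : ℝ => α⁻¹ *
        ((∫ x, (q x / p x) ^ α * p x ∂μ) - ∫ x in S, p x ∂μ))
      (Set.Ioc (0 : ℝ) (1 / 2)) := by
    intro a ha b hb hab
    dsimp only
    rw [hfeq a ha, hfeq b hb]
    refine integral_mono (hφint a ha) (hφint b hb) fun x => ?_
    exact mul_le_mul_of_nonneg_right (rpowSlope_mono (hr0 x) ha.1 hab) (hp x)
  -- the sequence
  set a : ℕ → ℝ := fun n => 1 / 2 * (1 / (n + 1)) with hadef
  have haIoc : ∀ n, a n ∈ Set.Ioc (0 : ℝ) (1 / 2) := by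
    intro n
    constructor
    · positivity
    · have h1 : (1 : ℝ) / (n + 1) ≤ 1 := by
        rw [div_le_one (by positivity)]
        simp [Nat.cast_nonneg]
      calc a n = 1 / 2 * (1 / (n + 1)) := rfl
        _ ≤ 1 / 2 * 1 := by nlinarith
        _ = 1 / 2 := by ring
  have haAnti : Antitone a := by
    intro n m h
    have : (1 : ℝ) / (m + 1) ≤ 1 / (n + 1) := by
      apply one_div_le_one_div_of_le (by positivity)
      exact_mod_cast Nat.succ_le_succ h
    calc a m = 1 / 2 * (1 / (m + 1)) := rfl
      _ ≤ 1 / 2 * (1 / (n + 1)) := by nlinarith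
      _ = a n := rfl
  have haTo : Tendsto a atTop (nhds 0) := by
    have h := tendsto_one_div_add_atTop_nhds_zero_nat.const_mul (1 / 2 : ℝ)
    rw [mul_zero] at h
    exact h
  have haTo' : Tendsto a atTop (nhdsWithin 0 (Set.Ioi 0)) :=
    tendsto_nhdsWithin_of_tendsto_nhds_of_eventually_within _ haTo
      (Eventually.of_forall fun n => (haIoc n).1)
  -- pointwise antitonicity
  have ptAnti : ∀ x, Antitone fun n => φ (a n) x := fun x n m h =>
    mul_le_mul_of_nonneg_right (rpowSlope_mono (hr0 x) (haIoc m).1 (haAnti h)) (hp x)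
  -- pointwise convergence on S
  have ptTend : ∀ x ∈ S, Tendsto (fun n => φ (a n) x) atTop (nhds (L x)) := by
    intro x hx
    rcases eq_or_lt_of_le (hp x) with hpx | hpx
    · have hpx' : p x = 0 := hpx.symm
      simp only [hφdef, hLdef, hpx', mul_zero]
      exact tendsto_const_nhds
    · have hrx : 0 < q x / p x := div_pos hx hpx
      have := ((rpowSlope_tendsto hrx).comp haTo').mul_const (p x)
      exact this.congr fun n => rfl
  -- pointwise lower bound on S
  have ptLe : ∀ α, 0 < α → ∀ x ∈ S, L x ≤ φ α x := by
    intro α hα x hx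
    rcases eq_or_lt_of_le (hp x) with hpx | hpx
    · have hpx' : p x = 0 := hpx.symm
      simp only [hφdef, hLdef, hpx', mul_zero, le_refl]
    · have hrx : 0 < q x / p x := div_pos hx hpx
      exact mul_le_mul_of_nonneg_right (rpowSlope_ge_log hrx hα) (hp x)
  -- measurability
  have hφmeas : ∀ α : ℝ, 0 < α → Measurable (φ α) := by
    intro α hα
    exact (measurable_const.mul
      (((Real.continuous_rpow_const hα.le).measurable.comp hrm).sub measurable_const)).mul hpm
  have hLmeas : Measurable L := (Real.measurable_log.comp hrm).mul hpm
  refine ⟨hmono, ?_, ?_⟩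
  · -- integrable case
    intro hInt
    have hMCT : Tendsto (fun n => ∫ x in S, φ (a n) x ∂μ) atTop
        (nhds (∫ x in S, L x ∂μ)) := by
      refine integral_tendsto_of_tendsto_of_antitone
        (fun n => hφint _ (haIoc n)) hInt (Eventually.of_forall fun x => ptAnti x) ?_
      filter_upwards [ae_restrict_mem hS] with x hx using ptTend x hx
    have hlow : ∀ α ∈ Set.Ioc (0 : ℝ) (1 / 2),
        (∫ x in S, L x ∂μ) ≤ ∫ x in S, φ α x ∂μ := by
      intro α hα
      refine integral_mono_ae hInt (hφint α hα) ?_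
      filter_upwards [ae_restrict_mem hS] with x hx using ptLe α hα.1 x hx
    rw [tendsto_order]
    constructor
    · intro c hc
      filter_upwards [Ioc_mem_nhdsGT_of_mem
        (show (0:ℝ) ∈ Set.Ico (0:ℝ) (1/2) from ⟨le_refl _, by norm_num⟩)] with α hα
      have h1 := hlow α hα
      rw [← hfeq α hα] at h1
      linarith
    · intro c hc
      obtain ⟨n, hn⟩ := (hMCT.eventually (gt_mem_nhds hc)).exists
      filter_upwards [Ioc_mem_nhdsGT_of_mem
        (show (0:ℝ) ∈ Set.Ico (0:ℝ) (a n) from ⟨le_refl _, (haIoc n).1⟩)] with α hα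
      have hαIoc : α ∈ Set.Ioc (0 : ℝ) (1 / 2) := ⟨hα.1, hα.2.trans (haIoc n).2⟩
      have h1 := hmono hαIoc (haIoc n) hα.2
      simp only at h1 ⊢
      rw [hfeq α hαIoc, hfeq _ (haIoc n)] at h1
      rw [hfeq α hαIoc]
      exact lt_of_le_of_lt h1 hn
  · -- non-integrable case
    intro hNInt
    have key : ∀ b : ℝ, ∃ n, (∫ x in S, φ (a n) x ∂μ) < b := by
      by_contra h
      push_neg at h
      obtain ⟨b, hb⟩ := h
      apply hNInt
      have hψint : ∀ n, Integrable (fun x => φ (a 0) x - φ (a n) x) (μ.restrict S) :=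
        fun n => (hφint _ (haIoc 0)).sub (hφint _ (haIoc n))
      have hψnn : ∀ n x, 0 ≤ φ (a 0) x - φ (a n) x :=
        fun n x => sub_nonneg.2 (ptAnti x (Nat.zero_le n))
      have hbound : ∀ n, (∫⁻ x in S, ENNReal.ofReal (φ (a 0) x - φ (a n) x) ∂μ)
          ≤ ENNReal.ofReal ((∫ x in S, φ (a 0) x ∂μ) - b) := by
        intro n
        rw [← ofReal_integral_eq_lintegral_ofReal (hψint n)
          (Eventually.of_forall (hψnn n))]
        apply ENNReal.ofReal_le_ofReal
        rw [integral_sub (hφint _ (haIoc 0)) (hφint _ (haIoc n))]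
        linarith [hb n]
      have hMCTl : Tendsto (fun n => ∫⁻ x in S, ENNReal.ofReal (φ (a 0) x - φ (a n) x) ∂μ)
          atTop (nhds (∫⁻ x in S, ENNReal.ofReal (φ (a 0) x - L x) ∂μ)) := by
        refine lintegral_tendsto_of_tendsto_of_monotone
          (fun n => (((hφmeas _ (haIoc 0).1).sub (hφmeas _ (haIoc n).1)).ennreal_ofReal).aemeasurable)
          ?_ ?_
        · refine Eventually.of_forall fun x => ?_
          intro n m hnm
          exact ENNReal.ofReal_le_ofReal (sub_le_sub_left (ptAnti x hnm) _)
        · filter_upwards [ae_restrict_mem hS] with x hx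
          exact (ENNReal.continuous_ofReal.tendsto _).comp
            (tendsto_const_nhds.sub (ptTend x hx))
      have hGfin : (∫⁻ x in S, ENNReal.ofReal (φ (a 0) x - L x) ∂μ)
          ≤ ENNReal.ofReal ((∫ x in S, φ (a 0) x ∂μ) - b) := le_of_tendsto' hMCTl hbound
      have hGint : Integrable (fun x => φ (a 0) x - L x) (μ.restrict S) := by
        refine ⟨(((hφmeas _ (haIoc 0).1).sub hLmeas).aestronglyMeasurable), ?_⟩
        have heq : (∫⁻ x in S, (‖φ (a 0) x - L x‖₊ : ENNReal) ∂μ)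
            = ∫⁻ x in S, ENNReal.ofReal (φ (a 0) x - L x) ∂μ := by
          refine lintegral_congr_ae ?_
          filter_upwards [ae_restrict_mem hS] with x hx
          exact Real.enorm_eq_ofReal (sub_nonneg.2 (ptLe _ (haIoc 0).1 x hx))
        show (∫⁻ x in S, (‖φ (a 0) x - L x‖₊ : ENNReal) ∂μ) < ⊤
        rw [heq]
        exact lt_of_le_of_lt hGfin ENNReal.ofReal_lt_top
      have : Integrable L (μ.restrict S) := by
        have h2 := (hφint _ (haIoc 0)).sub hGint
        exact h2.congr (Eventually.of_forall fun x => by simp only [Pi.sub_apply]; ring)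
      exact this
    rw [tendsto_atBot]
    intro b
    obtain ⟨n, hn⟩ := key b
    filter_upwards [Ioc_mem_nhdsGT_of_mem
      (show (0:ℝ) ∈ Set.Ico (0:ℝ) (a n) from ⟨le_refl _, (haIoc n).1⟩)] with α hα
    have hαIoc : α ∈ Set.Ioc (0 : ℝ) (1 / 2) := ⟨hα.1, hα.2.trans (haIoc n).2⟩
    have h1 := hmono hαIoc (haIoc n) hα.2
    simp only at h1 ⊢
    rw [hfeq α hαIoc, hfeq _ (haIoc n)] at h1
    rw [hfeq α hαIoc]
    exact le_of_lt (lt_of_le_of_lt h1 hn)
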